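/- Let F be the free group on three generators a, b, c, let N1 be the normal closure of {a} and N2 the normal closure of {b}, and let u = c²ba and v = cbca. Then u and v are conjugate in F/N1 and conjugate in F/N2, but u and v are not conjugate in F/(N1 ∩ N2). -/

import Mathlib

namespace Stmt4Aux

def pb : Equiv.Perm (Fin 4) := Equiv.swap 0 1 * Equiv.swap 1 2
def pc : Equiv.Perm (Fin 4) := Equiv.swap 0 1

def f1 : Fin 3 → Equiv.Perm (Fin 4) := ![1, pb, pc]
def f2 : Fin 3 → Equiv.Perm (Fin 4) := ![pb, 1, pc]

def ψ1 : FreeGroup (Fin 3) →* Equiv.Perm (Fin 4) := FreeGroup.lift f1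
def ψ2 : FreeGroup (Fin 3) →* Equiv.Perm (Fin 4) := FreeGroup.lift f2

lemma key1 : ∀ g : Equiv.Perm (Fin 4),
    g * (pc * pc * pb * 1) * g⁻¹ = pc * pb * pc * 1 → Equiv.Perm.sign g = -1 := by
  decide

lemma key2 : ∀ g : Equiv.Perm (Fin 4),
    g * (pc * pc * 1 * pb) * g⁻¹ = pc * 1 * pc * pb → Equiv.Perm.sign g = 1 := by
  decide

lemma sign_eq : (Equiv.Perm.sign.comp ψ1) = (Equiv.Perm.sign.comp ψ2) := by
  apply FreeGroup.ext_hom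
  intro i
  fin_cases i <;>
    simp only [MonoidHom.comp_apply, ψ1, ψ2, FreeGroup.lift_apply_of, f1, f2] <;> decide

end Stmt4Aux

theorem stmt_4 :
    let F := FreeGroup (Fin 3)
    let a : F := FreeGroup.of 0
    let b : F := FreeGroup.of 1
    let c : F := FreeGroup.of 2
    let N1 := Subgroup.normalClosure {a}
    let N2 := Subgroup.normalClosure {b}
    let u : F := c * c * b * a
    let v : F := c * b * c * a
    IsConj (QuotientGroup.mk u : F ⧸ N1) (QuotientGroup.mk v) ∧
    IsConj (QuotientGroup.mk u : F ⧸ N2) (QuotientGroup.mk v) ∧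
    ¬ IsConj (QuotientGroup.mk u : F ⧸ (N1 ⊓ N2)) (QuotientGroup.mk v) := by
  intro F a b c N1 N2 u v
  have hu : u = c * c * b * a := rfl
  have hv : v = c * b * c * a := rfl
  refine ⟨?_, ?_, ?_⟩
  · -- conjugate in F ⧸ N1
    have ha : (QuotientGroup.mk a : F ⧸ N1) = 1 :=
      (QuotientGroup.eq_one_iff _).mpr
        (Subgroup.subset_normalClosure (Set.mem_singleton a))
    rw [isConj_iff]
    refine ⟨(QuotientGroup.mk c)⁻¹, ?_⟩
    rw [hu, hv]
    simp only [QuotientGroup.mk_mul, ha, mul_one]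
    group
  · -- conjugate in F ⧸ N2
    have hb : (QuotientGroup.mk b : F ⧸ N2) = 1 :=
      (QuotientGroup.eq_one_iff _).mpr
        (Subgroup.subset_normalClosure (Set.mem_singleton b))
    rw [isConj_iff]
    refine ⟨1, ?_⟩
    rw [hu, hv]
    simp only [QuotientGroup.mk_mul, hb, mul_one, one_mul, inv_one]
  · -- not conjugate in F ⧸ (N1 ⊓ N2)
    intro h
    rw [isConj_iff] at h
    obtain ⟨q, hq⟩ := h
    obtain ⟨w, rfl⟩ := QuotientGroup.mk_surjective q
    have hmem : w * u * w⁻¹ * v⁻¹ ∈ N1 ⊓ N2 := by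
      rw [← QuotientGroup.eq_one_iff (N := N1 ⊓ N2)]
      simp only [QuotientGroup.mk_mul, QuotientGroup.mk_inv, hq, mul_inv_cancel]
    have hker1 : N1 ≤ Stmt4Aux.ψ1.ker := by
      apply Subgroup.normalClosure_le_normal
      intro x hx
      rw [Set.mem_singleton_iff] at hx
      subst hx
      show Stmt4Aux.ψ1 a = 1
      simp [Stmt4Aux.ψ1, Stmt4Aux.f1, a, FreeGroup.lift_apply_of]
    have hker2 : N2 ≤ Stmt4Aux.ψ2.ker := by
      apply Subgroup.normalClosure_le_normal
      intro x hx
      rw [Set.mem_singleton_iff] at hx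
      subst hx
      show Stmt4Aux.ψ2 b = 1
      simp [Stmt4Aux.ψ2, Stmt4Aux.f2, b, FreeGroup.lift_apply_of]
    have e1 : Stmt4Aux.ψ1 w * Stmt4Aux.ψ1 u * (Stmt4Aux.ψ1 w)⁻¹ = Stmt4Aux.ψ1 v := by
      have := hker1 hmem.1
      rw [MonoidHom.mem_ker] at this
      simpa [map_mul, map_inv Stmt4Aux.ψ1, mul_inv_eq_one] using this
    have e2 : Stmt4Aux.ψ2 w * Stmt4Aux.ψ2 u * (Stmt4Aux.ψ2 w)⁻¹ = Stmt4Aux.ψ2 v := by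
      have := hker2 hmem.2
      rw [MonoidHom.mem_ker] at this
      simpa [map_mul, map_inv Stmt4Aux.ψ2, mul_inv_eq_one] using this
    have hu1 : Stmt4Aux.ψ1 u = Stmt4Aux.pc * Stmt4Aux.pc * Stmt4Aux.pb * 1 := by
      rw [hu]
      simp [Stmt4Aux.ψ1, Stmt4Aux.f1, a, b, c, map_mul, FreeGroup.lift_apply_of]
    have hv1 : Stmt4Aux.ψ1 v = Stmt4Aux.pc * Stmt4Aux.pb * Stmt4Aux.pc * 1 := by
      rw [hv]
      simp [Stmt4Aux.ψ1, Stmt4Aux.f1, a, b, c, map_mul, FreeGroup.lift_apply_of]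
    have hu2 : Stmt4Aux.ψ2 u = Stmt4Aux.pc * Stmt4Aux.pc * 1 * Stmt4Aux.pb := by
      rw [hu]
      simp [Stmt4Aux.ψ2, Stmt4Aux.f2, a, b, c, map_mul, FreeGroup.lift_apply_of]
    have hv2 : Stmt4Aux.ψ2 v = Stmt4Aux.pc * 1 * Stmt4Aux.pc * Stmt4Aux.pb := by
      rw [hv]
      simp [Stmt4Aux.ψ2, Stmt4Aux.f2, a, b, c, map_mul, FreeGroup.lift_apply_of]
    have s1 : Equiv.Perm.sign (Stmt4Aux.ψ1 w) = -1 :=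
      Stmt4Aux.key1 _ (by rw [← hu1, ← hv1]; exact e1)
    have s2 : Equiv.Perm.sign (Stmt4Aux.ψ2 w) = 1 :=
      Stmt4Aux.key2 _ (by rw [← hu2, ← hv2]; exact e2)
    have : Equiv.Perm.sign (Stmt4Aux.ψ1 w) = Equiv.Perm.sign (Stmt4Aux.ψ2 w) := by
      have := congrArg (fun φ => φ w) Stmt4Aux.sign_eq
      simpa using this
    rw [s1, s2] at this
    exact absurd this (by decide)
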